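/- arXiv:1805.01329 — 4 statements merged into one kernel-verified Lean document; each statement's English description precedes it below -/
import Mathlib

section
/- For every n ≥ 2 and every bifurcating tree T with n leaves, if T is not isomorphic to the comb K_n, then C(T) < C(K_n); moreover C(K_n) = (n−1)(n−2)/2. Hence the comb K_n is the unique tree maximizing the Colless index on the set of bifurcating trees with n leaves. -/
/-- Rooted trees encoded as a root together with the list of subtrees
rooted at its children. -/
inductive MTree : Type
  | node : List MTree → MTree

namespace MTree

/-- Number of leaves of a tree (a single node counts as one leaf). -/
def leafCount : MTree → ℕ
  | node ts => max 1 (ts.attach.map (fun x => leafCount x.1)).sum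
decreasing_by
  have := List.sizeOf_lt_of_mem x.2
  simp only [node.sizeOf_spec]; omega

/-- `deltaF f T = Σ_{v ∈ V(T)} f (deg v)`, the `f`-size of `T`. -/
noncomputable def deltaF (f : ℕ → ℝ) : MTree → ℝ
  | node ts => f ts.length + (ts.attach.map (fun x => deltaF f x.1)).sum
decreasing_by
  have := List.sizeOf_lt_of_mem x.2
  simp only [node.sizeOf_spec]; omega

/-- The Colless-like index relative to a "dissimilarity" `D` and a function `f`:
the sum, over all internal nodes `v`, of `D` applied to the list of `f`-sizes of
the subtrees rooted at the children of `v`. -/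
noncomputable def cIndex (D : List ℝ → ℝ) (f : ℕ → ℝ) : MTree → ℝ
  | node ts => (if ts.isEmpty then 0 else D (ts.map (deltaF f)))
      + (ts.attach.map (fun x => cIndex D f x.1)).sum
decreasing_by
  have := List.sizeOf_lt_of_mem x.2
  simp only [node.sizeOf_spec]; omega

/-- The Colless index of a (bifurcating) tree: the sum over the internal nodes of the
absolute value of the difference of the numbers of leaves of the two child subtrees. -/
def colless : MTree → ℕ
  | node ts =>
      (match ts with
       | [a, b] => ((a.leafCount : ℤ) - (b.leafCount : ℤ)).natAbs
       | _ => 0)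
      + (ts.attach.map (fun x => colless x.1)).sum
decreasing_by
  have := List.sizeOf_lt_of_mem x.2
  simp only [node.sizeOf_spec]; omega

/-- The quadratic Colless index of a (bifurcating) tree. -/
def collessSq : MTree → ℕ
  | node ts =>
      (match ts with
       | [a, b] => ((a.leafCount : ℤ) - (b.leafCount : ℤ)).natAbs ^ 2
       | _ => 0)
      + (ts.attach.map (fun x => collessSq x.1)).sum
decreasing_by
  have := List.sizeOf_lt_of_mem x.2
  simp only [node.sizeOf_spec]; omega

/-- A tree in the sense of the paper: no node of out-degree 1. -/
inductive WellFormed : MTree → Prop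
  | node {ts : List MTree} : ts.length ≠ 1 → (∀ t ∈ ts, WellFormed t) →
      WellFormed (node ts)

/-- A bifurcating tree: every internal node has out-degree exactly 2. -/
inductive Bifurcating : MTree → Prop
  | node {ts : List MTree} : (ts.length = 0 ∨ ts.length = 2) →
      (∀ t ∈ ts, Bifurcating t) → Bifurcating (node ts)

/-- Isomorphism of (list-encoded) trees: the lists of child subtrees match up to
a permutation and recursively isomorphic subtrees. -/
inductive Iso : MTree → MTree → Prop
  | node {ts us vs : List MTree} :
      List.Forall₂ Iso ts vs → vs.Perm us → Iso (node ts) (node us)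

/-- A tree is fully symmetric when, for every internal node, the subtrees rooted at
its children are pairwise isomorphic. -/
inductive FullySymmetric : MTree → Prop
  | node {ts : List MTree} : (∀ s ∈ ts, ∀ t ∈ ts, Iso s t) →
      (∀ t ∈ ts, FullySymmetric t) → FullySymmetric (node ts)

/-- The comb `K_n` with `n ≥ 1` leaves. -/
def comb : ℕ → MTree
  | 0 => node []
  | 1 => node []
  | n + 2 => node [node [], comb (n + 1)]

/-- The star `FS_n`, whose root has `n` children, all of them leaves. -/
def star (n : ℕ) : MTree := node (List.replicate n (node []))

/-- The median of a list of real numbers. -/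
noncomputable def median (l : List ℝ) : ℝ :=
  let s := l.mergeSort (fun a b => a ≤ b)
  if l.length % 2 = 1 then s.getD (l.length / 2) 0
  else (s.getD (l.length / 2 - 1) 0 + s.getD (l.length / 2) 0) / 2

/-- The mean deviation from the median of a list of real numbers. -/
noncomputable def MDM (l : List ℝ) : ℝ :=
  (l.map (fun x => |x - median l|)).sum / l.length

/-- The sample variance of a list of real numbers. -/
noncomputable def svar (l : List ℝ) : ℝ :=
  (l.map (fun x => (x - l.sum / l.length) ^ 2)).sum / ((l.length : ℝ) - 1)

/-- The sample standard deviation of a list of real numbers. -/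
noncomputable def ssd (l : List ℝ) : ℝ := Real.sqrt (svar l)

end MTree

namespace MTree

lemma leafCount_node (ts : List MTree) :
    leafCount (node ts) = max 1 (ts.map leafCount).sum := by
  rw [leafCount]
  congr 1
  rw [List.attach_map_val (l := ts) (f := leafCount)]

lemma leafCount_pos (t : MTree) : 1 ≤ t.leafCount := by
  cases t with
  | node ts => rw [leafCount_node]; omega

lemma leafCount_pair (a b : MTree) :
    leafCount (node [a, b]) = a.leafCount + b.leafCount := by
  rw [leafCount_node]
  have := leafCount_pos a
  simp; omega

lemma colless_nil : colless (node []) = 0 := by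
  rw [colless]; simp
  intro a b h; simp at h

lemma colless_pair (a b : MTree) :
    colless (node [a, b]) =
      ((a.leafCount : ℤ) - (b.leafCount : ℤ)).natAbs + (colless a + colless b) := by
  rw [colless]; simp

end MTree

namespace MTree

/-- abbreviation for the maximum Colless value -/
def hC (n : ℕ) : ℕ := (n - 1) * (n - 2) / 2

lemma two_hC (n : ℕ) : 2 * hC n = (n - 1) * (n - 2) := by
  unfold hC
  match n with
  | 0 => simp
  | 1 => simp
  | 2 => simp
  | (m+3) =>
    have e1 : m + 3 - 1 = m + 2 := rfl
    have e2 : m + 3 - 2 = m + 1 := rfl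
    rw [e1, e2]
    have he : Even ((m + 2) * (m + 1)) := by
      rw [Nat.mul_comm]
      exact Nat.even_mul_succ_self (m+1)
    exact Nat.mul_div_cancel' he.two_dvd

lemma hC_cast (n : ℕ) (hn : 1 ≤ n) : 2 * (hC n : ℤ) = ((n : ℤ) - 1) * ((n : ℤ) - 2) := by
  rcases Nat.lt_or_ge n 2 with h2 | h2
  · interval_cases n <;> simp [hC]
  · have h := congrArg (Nat.cast : ℕ → ℤ) (two_hC n)
    push_cast [Nat.cast_sub (by omega : 1 ≤ n), Nat.cast_sub (by omega : 2 ≤ n)] at h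
    linarith

lemma key_ineq (a b : ℕ) (ha : 1 ≤ a) (hb : 1 ≤ b) :
    (((a:ℤ) - b).natAbs + hC a + hC b ≤ hC (a + b)) ∧
    (((a:ℤ) - b).natAbs + hC a + hC b = hC (a + b) → a = 1 ∨ b = 1) := by
  have ea := hC_cast a ha
  have eb := hC_cast b hb
  have eab := hC_cast (a + b) (by omega)
  push_cast at eab
  have habs : ((((a:ℤ) - b).natAbs : ℤ)) = |(a:ℤ) - b| := ((a:ℤ) - b).abs_eq_natAbs.symm
  have h1 : (1:ℤ) ≤ a := by exact_mod_cast ha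
  have h2 : (1:ℤ) ≤ b := by exact_mod_cast hb
  have hle : 2 * (|(a:ℤ) - b| + hC a + hC b) ≤ 2 * (hC (a+b) : ℤ) := by
    rcases le_total (a:ℤ) b with h | h
    · rw [abs_of_nonpos (by linarith)]
      nlinarith [mul_nonneg (by linarith : (0:ℤ) ≤ (a:ℤ) - 1) (by linarith : (0:ℤ) ≤ (b:ℤ) - 1)]
    · rw [abs_of_nonneg (by linarith)]
      nlinarith [mul_nonneg (by linarith : (0:ℤ) ≤ (a:ℤ) - 1) (by linarith : (0:ℤ) ≤ (b:ℤ) - 1)]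
  constructor
  · have goal : ((((a:ℤ) - b).natAbs + hC a + hC b : ℕ) : ℤ) ≤ ((hC (a+b) : ℕ) : ℤ) := by
      push_cast
      linarith
    exact_mod_cast goal
  · intro heq
    by_contra hcon
    push_neg at hcon
    obtain ⟨ha2', hb2'⟩ := hcon
    have ha2 : 2 ≤ a := by omega
    have hb2 : 2 ≤ b := by omega
    have g1 : (2:ℤ) ≤ a := by exact_mod_cast ha2
    have g2 : (2:ℤ) ≤ b := by exact_mod_cast hb2
    have hstrict : 2 * (|(a:ℤ) - b| + hC a + hC b) < 2 * (hC (a+b) : ℤ) := by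
      rcases le_total (a:ℤ) b with h | h
      · rw [abs_of_nonpos (by linarith)]
        nlinarith [mul_nonneg (by linarith : (0:ℤ) ≤ (a:ℤ) - 2) (by linarith : (0:ℤ) ≤ (b:ℤ) - 2)]
      · rw [abs_of_nonneg (by linarith)]
        nlinarith [mul_nonneg (by linarith : (0:ℤ) ≤ (a:ℤ) - 2) (by linarith : (0:ℤ) ≤ (b:ℤ) - 2)]
    have hz := congrArg (Nat.cast : ℕ → ℤ) heq
    push_cast at hz
    linarith

lemma iso_leaf : Iso (node []) (node []) :=
  Iso.node List.Forall₂.nil (List.Perm.nil)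

lemma leafCount_comb_succ : ∀ n : ℕ, leafCount (comb (n+1)) = n + 1 := by
  intro n
  induction n with
  | zero => rw [comb, leafCount_node]; simp
  | succ m ih =>
    show leafCount (node [node [], comb (m+1)]) = m + 2
    rw [leafCount_pair, ih, leafCount_node]
    simp
    omega

lemma leaf_count_one_leaf : 1 ≤ leafCount (node []) := leafCount_pos _

lemma leafCount_leaf : leafCount (node []) = 1 := by
  rw [leafCount_node]; simp

lemma colless_comb_succ : ∀ n : ℕ, colless (comb (n+1)) = hC (n+1) := by
  intro n
  induction n with
  | zero => rw [comb, colless_nil]; rfl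
  | succ m ih =>
    show colless (node [node [], comb (m+1)]) = hC (m+2)
    rw [colless_pair, colless_nil, ih, leafCount_leaf, leafCount_comb_succ]
    have habs : ((1 : ℤ) - ((m : ℤ) + 1)).natAbs = m := by
      push_cast
      omega
    have hstep : hC (m + 2) = m + hC (m + 1) := by
      have p2 : 2 * hC (m + 2) = (m + 1) * m := two_hC (m + 2)
      have p1 : 2 * hC (m + 1) = m * (m - 1) := two_hC (m + 1)
      have hpq : (m + 1) * m = m * (m - 1) + 2 * m := by
        rcases m with _ | k
        · simp
        · have : k + 1 - 1 = k := rfl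
          rw [this]; ring
      linarith
    push_cast at habs ⊢
    omega

lemma bifurcating_leaf_of_leafCount_one {t : MTree} (hB : t.Bifurcating)
    (hL : t.leafCount = 1) : t = node [] := by
  cases t with
  | node ts =>
    cases hB with
    | node hlen hts =>
      rcases hlen with h0 | h2
      · rw [List.length_eq_zero_iff.mp h0]
      · exfalso
        obtain ⟨a, l, rfl⟩ := List.exists_cons_of_length_eq_add_one (by omega : ts.length = 1 + 1)
        obtain ⟨b, l', rfl⟩ := List.exists_cons_of_length_eq_add_one (by simpa using h2)
        have hl' : l' = [] := List.length_eq_zero_iff.mp (by simpa using h2)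
        subst hl'
        rw [leafCount_pair] at hL
        have := leafCount_pos a
        have := leafCount_pos b
        omega

lemma main_bound : ∀ n : ℕ, ∀ T : MTree, T.Bifurcating → T.leafCount = n →
    T.colless ≤ hC n ∧ (T.colless = hC n → T.Iso (comb n)) := by
  intro n
  induction n using Nat.strong_induction_on with
  | _ n IH =>
    intro T hB hL
    cases T with
    | node ts =>
      cases hB with
      | node hlen hts =>
        rcases hlen with h0 | h2
        · -- leaf
          have hts0 : ts = [] := List.length_eq_zero_iff.mp h0
          subst hts0
          have hn1 : n = 1 := by rw [← hL, leafCount_leaf]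
          subst hn1
          refine ⟨by rw [colless_nil]; exact Nat.zero_le _, fun _ => ?_⟩
          exact iso_leaf
        · obtain ⟨a, l, rfl⟩ := List.exists_cons_of_length_eq_add_one (by omega : ts.length = 1 + 1)
          obtain ⟨b, l', rfl⟩ := List.exists_cons_of_length_eq_add_one (by simpa using h2)
          have hl' : l' = [] := List.length_eq_zero_iff.mp (by simpa using h2)
          subst hl'
          have ka := leafCount_pos a
          have kb := leafCount_pos b
          have hab : a.leafCount + b.leafCount = n := by rw [← hL, leafCount_pair]
          have IHa := IH a.leafCount (by omega) a (hts a (by simp)) rfl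
          have IHb := IH b.leafCount (by omega) b (hts b (by simp)) rfl
          have key := key_ineq a.leafCount b.leafCount ka kb
          rw [hab] at key
          rw [colless_pair]
          constructor
          · omega
          · intro heq
            have hca : a.colless = hC a.leafCount := by omega
            have hcb : b.colless = hC b.leafCount := by omega
            have hd : ((a.leafCount : ℤ) - b.leafCount).natAbs + hC a.leafCount
                + hC b.leafCount = hC n := by omega
            rcases key.2 hd with h1 | h1
            · -- a is a leaf
              have haleaf : a = node [] := bifurcating_leaf_of_leafCount_one (hts a (by simp)) h1
              have hkb : b.leafCount = n - 1 := by omega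
              have hn2 : 2 ≤ n := by omega
              obtain ⟨m, rfl⟩ : ∃ m, n = m + 2 := ⟨n - 2, by omega⟩
              have hcbn : b.colless = hC (m + 1) := by rw [hcb]; congr 1 <;> omega
              have hisob : b.Iso (comb (m + 1)) := by
                have := (IH b.leafCount (by omega) b (hts b (by simp)) rfl).2
                rw [hkb] at this
                have e : hC (m + 2 - 1) = hC (m + 1) := by congr 1
                have e2 : comb (m + 2 - 1) = comb (m + 1) := by congr 1
                rw [e2] at this
                exact this (hcbn.trans e.symm)
              subst haleaf
              show Iso (node [node [], b]) (node [node [], comb (m+1)])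
              exact Iso.node (List.Forall₂.cons iso_leaf (List.Forall₂.cons hisob List.Forall₂.nil))
                (List.Perm.refl _)
            · -- b is a leaf
              have hbleaf : b = node [] := bifurcating_leaf_of_leafCount_one (hts b (by simp)) h1
              have hka : a.leafCount = n - 1 := by omega
              have hn2 : 2 ≤ n := by omega
              obtain ⟨m, rfl⟩ : ∃ m, n = m + 2 := ⟨n - 2, by omega⟩
              have hcan : a.colless = hC (m + 1) := by rw [hca]; congr 1 <;> omega
              have hisoa : a.Iso (comb (m + 1)) := by
                have := (IH a.leafCount (by omega) a (hts a (by simp)) rfl).2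
                rw [hka] at this
                have e : hC (m + 2 - 1) = hC (m + 1) := by congr 1
                have e2 : comb (m + 2 - 1) = comb (m + 1) := by congr 1
                rw [e2] at this
                exact this (hcan.trans e.symm)
              subst hbleaf
              show Iso (node [a, node []]) (node [node [], comb (m+1)])
              exact Iso.node
                (List.Forall₂.cons hisoa (List.Forall₂.cons iso_leaf List.Forall₂.nil))
                (List.Perm.swap _ _ _)

end MTree
/-- The comb `K_n` uniquely maximizes the Colless index among bifurcating trees with
`n ≥ 2` leaves, and its Colless index is `(n-1)(n-2)/2`. -/
theorem colless_lt_colless_comb_of_not_iso (n : ℕ) (hn : 2 ≤ n) :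
    MTree.colless (MTree.comb n) = (n - 1) * (n - 2) / 2 ∧
    ∀ T : MTree, T.WellFormed → T.Bifurcating → T.leafCount = n →
      ¬ T.Iso (MTree.comb n) → T.colless < MTree.colless (MTree.comb n) := by
  obtain ⟨m, rfl⟩ : ∃ m, n = m + 1 := ⟨n - 1, by omega⟩
  have hc : MTree.colless (MTree.comb (m + 1)) = MTree.hC (m + 1) :=
    MTree.colless_comb_succ m
  refine ⟨hc, fun T _ hB hL hni => ?_⟩
  have h := MTree.main_bound (m + 1) T hB hL
  rw [hc]
  rcases Nat.lt_or_ge T.colless (MTree.hC (m + 1)) with hlt | hge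
  · exact hlt
  · exact absurd (h.2 (le_antisymm h.1 hge)) hni
end

section
/- Let f: ℕ → ℝ≥0 be any function and let T be a bifurcating tree. Then 𝔠_{var,f}(T) = ((f(0)+f(2))²/2)·C⁽²⁾(T). -/
namespace MTree

theorem strongInd {P : MTree → Prop} (h : ∀ ts, (∀ t ∈ ts, P t) → P (node ts)) :
    ∀ T, P T
  | node ts => h ts (fun t ht => strongInd h t)
decreasing_by
  have := List.sizeOf_lt_of_mem ht
  simp only [node.sizeOf_spec]; omega

theorem one_le_leafCount : ∀ T : MTree, 1 ≤ T.leafCount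
  | node ts => by rw [leafCount]; omega

theorem svar_pair (x y : ℝ) : svar [x, y] = (x - y) ^ 2 / 2 := by
  simp [svar]
  ring

theorem deltaF_eq (f : ℕ → ℝ) (T : MTree) : T.Bifurcating →
      deltaF f T = (f 0 + f 2) * T.leafCount - f 2 := by
  induction T using strongInd with
  | h ts ih =>
    intro hb
    rcases hb with ⟨h, hts⟩
    rcases h with h | h
    · rw [List.length_eq_zero_iff] at h
      subst h
      simp [deltaF, leafCount]
    · match ts, h with
      | [a, b], _ =>
        have ha := ih a (by simp) (hts a (by simp))
        have hb := ih b (by simp) (hts b (by simp))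
        have h1 := one_le_leafCount a
        have h2 := one_le_leafCount b
        rw [deltaF, leafCount]
        simp only [List.attach_cons, List.attach_nil, List.map_cons, List.map_nil,
          List.sum_cons, List.sum_nil, List.length_cons, List.length_nil, List.map_map,
          add_zero]
        rw [ha, hb]
        have : max 1 (a.leafCount + b.leafCount) = a.leafCount + b.leafCount := by
          omega
        rw [this]
        push_cast
        ring

theorem cIndex_svar (f : ℕ → ℝ) (T : MTree) : T.Bifurcating →
    MTree.cIndex MTree.svar f T = (f 0 + f 2) ^ 2 / 2 * T.collessSq := by
  induction T using strongInd with
  | h ts ih =>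
    intro hb
    rcases hb with ⟨h, hts⟩
    rcases h with h | h
    · rw [List.length_eq_zero_iff] at h
      subst h
      simp [cIndex, collessSq]
    · match ts, h with
      | [a, b], _ =>
        have ha := ih a (by simp) (hts a (by simp))
        have hb := ih b (by simp) (hts b (by simp))
        have da := deltaF_eq f a (hts a (by simp))
        have db := deltaF_eq f b (hts b (by simp))
        rw [cIndex, collessSq]
        simp only [List.attach_cons, List.map_cons, List.map_nil, List.sum_cons,
          List.sum_nil, List.isEmpty_cons, List.attach_nil, add_zero]
        rw [ha, hb, da, db, svar_pair]
        have hcast : ((((a.leafCount : ℤ) - (b.leafCount : ℤ)).natAbs : ℝ)) ^ 2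
            = ((a.leafCount : ℝ) - (b.leafCount : ℝ)) ^ 2 := by
          rw [Nat.cast_natAbs]
          push_cast
          rw [sq_abs]
        push_cast
        rw [hcast]
        ring

end MTree

/-- On bifurcating trees, the Colless-like index `𝔠_{var,f}` equals
`(f 0 + f 2)²/2` times the quadratic Colless index. -/
theorem cIndex_var_eq_collessSq (f : ℕ → ℝ) (hf : ∀ n, 0 ≤ f n)
    (T : MTree) (hT : T.Bifurcating) :
    MTree.cIndex MTree.svar f T = (f 0 + f 2) ^ 2 / 2 * T.collessSq :=
  MTree.cIndex_svar f T hT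
end

section
/- For all integers k, l ≥ 1 and all integers n₁,…,n_k, m₁,…,m_l ≥ 2: if n₁⋯n_k + Σ_{i=1}^{k} (n₁⋯n_{i−1})·e^{nᵢ} = m₁⋯m_l + Σ_{j=1}^{l} (m₁⋯m_{j−1})·e^{m_j} (where the empty products n₁⋯n₀ and m₁⋯m₀ equal 1), then k = l and nᵢ = mᵢ for every i. In other words, the map (n₁,…,n_k) ↦ Δ_f(n₁,…,n_k) with f(n) = eⁿ is injective on tuples of integers ≥ 2; equivalently, non-isomorphic fully symmetric trees have different eⁿ-sizes. -/
open Polynomial Finset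

lemma exp_poly_integral (f : Polynomial ℝ) (u : ℝ) :
    Real.exp u * (sumIDeriv f).eval 0 - (sumIDeriv f).eval u
      = ∫ t in (0:ℝ)..u, Real.exp (u - t) * f.eval t := by
  have key : ∀ t : ℝ, HasDerivAt (fun t => -(Real.exp (u - t) * (sumIDeriv f).eval t))
      (Real.exp (u - t) * f.eval t) t := by
    intro t
    have h1 : HasDerivAt (fun t : ℝ => Real.exp (u - t)) (-Real.exp (u - t)) t := by
      have h0 : HasDerivAt (fun t : ℝ => u - t) (-1) t := by
        simpa using (hasDerivAt_id t).const_sub u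
      simpa using h0.exp
    have h2 := (sumIDeriv f).hasDerivAt t
    have h3 := (h1.mul h2).neg
    refine h3.congr_deriv ?_
    have hf : f.eval t = (sumIDeriv f).eval t - (derivative (sumIDeriv f)).eval t := by
      conv_lhs => rw [show f = sumIDeriv f - derivative (sumIDeriv f) by
        rw [← sumIDeriv_derivative]
        conv_lhs => rw [show f = sumIDeriv f - sumIDeriv (derivative f) by
          rw [sumIDeriv_eq_self_add f, sumIDeriv_derivative]; ring]]
      rw [eval_sub]
    rw [hf]; ring
  have hint : IntervalIntegrable (fun t => Real.exp (u - t) * f.eval t)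
      MeasureTheory.volume 0 u := by
    apply Continuous.intervalIntegrable
    exact (Real.continuous_exp.comp (continuous_const.sub continuous_id)).mul f.continuous
  have := intervalIntegral.integral_eq_sub_of_hasDerivAt (fun t _ => key t) hint
  rw [this]
  simp [Real.exp_zero]
  ring

lemma exp_poly_integral_bound (f : Polynomial ℝ) (u M : ℝ) (hu : 0 ≤ u)
    (hM : ∀ t ∈ Set.Icc (0:ℝ) u, |f.eval t| ≤ M) :
    |∫ t in (0:ℝ)..u, Real.exp (u - t) * f.eval t| ≤ Real.exp u * M * u := by
  have h := intervalIntegral.norm_integral_le_of_norm_le_const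
      (C := Real.exp u * M) (f := fun t => Real.exp (u - t) * f.eval t) (a := (0:ℝ)) (b := u) ?_
  · rw [Real.norm_eq_abs] at h
    calc |∫ t in (0:ℝ)..u, Real.exp (u - t) * f.eval t| ≤ Real.exp u * M * |u - 0| := h
      _ = Real.exp u * M * u := by rw [sub_zero, abs_of_nonneg hu]
  · intro x hx
    rw [Set.uIoc_of_le hu] at hx
    rw [Real.norm_eq_abs, abs_mul, abs_of_nonneg (Real.exp_pos _).le]
    have h1 : Real.exp (u - x) ≤ Real.exp u := Real.exp_le_exp.mpr (by linarith [hx.1])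
    have h2 : |f.eval x| ≤ M := hM x ⟨hx.1.le, hx.2⟩
    have h3 : (0:ℝ) ≤ |f.eval x| := abs_nonneg _
    nlinarith [Real.exp_pos (u - x), Real.exp_pos u]

lemma hermite_int_bound (n : ℕ) (a : ℕ → ℤ) (q : ℕ) (hq : q.Prime)
    (hqn : n < q) (ha0 : a 0 ≠ 0) (hqa : (a 0).natAbs < q) :
    ((q - 1).factorial : ℤ) ≤
      |∑ k ∈ range (n + 1),
        a k * (sumIDeriv (X ^ (q - 1) * ∏ i ∈ Icc 1 n, (X - C (i : ℤ)) ^ q)).eval (k : ℤ)| := by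
  set F : Polynomial ℤ := X ^ (q - 1) * ∏ i ∈ Icc 1 n, (X - C (i : ℤ)) ^ q with hF
  have hq1 : 0 < q := hq.pos
  have hid : algebraMap ℤ ℤ = RingHom.id ℤ := by ext x; simp
  have hinj : Function.Injective ⇑(algebraMap ℤ ℤ) := by
    rw [hid]; exact fun a b h => h
  obtain ⟨gp0, _, h0⟩ := aeval_sumIDeriv_of_pos ℤ F hq1 hinj
  have hfac0 : F.map (algebraMap ℤ ℤ)
      = (X - C (0 : ℤ)) ^ (q - 1) * (∏ i ∈ Icc 1 n, (X - C (i : ℤ)) ^ q) := by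
    rw [hid, Polynomial.map_id, C_0, sub_zero]
  have h00 := h0 (0 : ℤ) hfac0
  obtain ⟨gp, _, hgpk⟩ := aeval_sumIDeriv ℤ F q
  have hk : ∀ k ∈ Icc 1 n,
      (aeval (k : ℤ)) (sumIDeriv F) = q.factorial • (aeval (k : ℤ) gp : ℤ) := by
    intro k hkmem
    apply hgpk (k : ℤ)
      ⟨X ^ (q - 1) * ∏ i ∈ (Icc 1 n).erase k, (X - C (i : ℤ)) ^ q, ?_⟩
    rw [hid, Polynomial.map_id, hF, ← Finset.mul_prod_erase _ _ hkmem]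
    ring
  set E : ℤ := (∏ i ∈ Icc 1 n, (X - C (i : ℤ)) ^ q).eval 0 with hE
  set m : ℤ := a 0 * aeval (0 : ℤ) gp0 + ∑ k ∈ Icc 1 n, a k * aeval (k : ℤ) gp with hm
  have hsplit : range (n + 1) = insert 0 (Icc 1 n) := by
    ext x; simp [Finset.mem_range, Finset.mem_insert, Finset.mem_Icc]; omega
  have hfq : (q.factorial : ℤ) = q * (q - 1).factorial := by
    exact_mod_cast (Nat.mul_factorial_pred hq1.ne').symm
  have hNval : ∑ k ∈ range (n + 1), a k * (sumIDeriv F).eval (k : ℤ)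
      = ((q - 1).factorial : ℤ) * (a 0 * E + q * m) := by
    rw [hsplit, Finset.sum_insert (by simp)]
    have e0 : (sumIDeriv F).eval (0 : ℤ) = aeval (0 : ℤ) (sumIDeriv F) := by
      rw [coe_aeval_eq_eval]
    have hsum : ∑ k ∈ Icc 1 n, a k * (sumIDeriv F).eval (k : ℤ)
        = (q.factorial : ℤ) * ∑ k ∈ Icc 1 n, a k * aeval (k : ℤ) gp := by
      rw [Finset.mul_sum]
      refine Finset.sum_congr rfl (fun k hkmem => ?_)
      have ek : (sumIDeriv F).eval (k : ℤ) = aeval (k : ℤ) (sumIDeriv F) := by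
        rw [coe_aeval_eq_eval]
      rw [ek, hk k hkmem, nsmul_eq_mul]
      ring
    rw [hsum, Nat.cast_zero, e0, h00, nsmul_eq_mul, nsmul_eq_mul, hfq, hm]
    ring
  have hqz : Prime (q : ℤ) := Nat.prime_iff_prime_int.mp hq
  have hndvd : ¬ (q : ℤ) ∣ a 0 * E := by
    intro hdvd
    rcases hqz.dvd_mul.mp hdvd with hd | hd
    · have : q ∣ (a 0).natAbs := by
        rw [← Int.natAbs_natCast q]
        exact Int.natAbs_dvd_natAbs.mpr hd
      have := Nat.le_of_dvd (Int.natAbs_pos.mpr ha0) this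
      omega
    · rw [hE] at hd
      rw [eval_prod] at hd
      obtain ⟨i, himem, hdi⟩ := hqz.exists_mem_finset_dvd hd
      rw [eval_pow, eval_sub, eval_X, eval_C, zero_sub] at hdi
      have : (q : ℤ) ∣ (i : ℤ) := (dvd_neg).mp (hqz.dvd_of_dvd_pow hdi)
      have : q ∣ i := Int.natCast_dvd_natCast.mp this
      have hi := Finset.mem_Icc.mp himem
      have := Nat.le_of_dvd (by omega) this
      omega
  have hKne : a 0 * E + q * m ≠ 0 := by
    intro hzero
    exact hndvd ⟨-m, by linarith⟩
  rw [hNval, abs_mul, abs_of_nonneg (by positivity : (0:ℤ) ≤ ((q-1).factorial : ℤ))]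
  have h1 : (1 : ℤ) ≤ |a 0 * E + q * m| := Int.one_le_abs hKne
  have h2 : (0 : ℤ) < ((q - 1).factorial : ℤ) := by exact_mod_cast Nat.factorial_pos _
  nlinarith

lemma F_eval_bound (n q : ℕ) (hn : 1 ≤ n) (t : ℝ) (h0 : 0 ≤ t) (htn : t ≤ n) :
    |(X ^ (q - 1) * ∏ i ∈ Icc 1 n, (X - C (i : ℝ)) ^ q).eval t|
      ≤ (n : ℝ) ^ (q - 1 + n * q) := by
  have hn' : (1:ℝ) ≤ (n:ℝ) := by exact_mod_cast hn
  rw [eval_mul, eval_pow, eval_X, eval_prod, abs_mul, abs_pow]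
  have h1 : |t| ^ (q - 1) ≤ (n:ℝ) ^ (q - 1) := by
    apply pow_le_pow_left₀ (abs_nonneg t)
    rw [abs_of_nonneg h0]; exact htn
  have h2 : |∏ i ∈ Icc 1 n, ((X - C (i:ℝ)) ^ q).eval t| ≤ ((n:ℝ) ^ q) ^ n := by
    rw [Finset.abs_prod]
    have : ∀ i ∈ Icc 1 n, |((X - C (i:ℝ)) ^ q).eval t| ≤ (n:ℝ) ^ q := by
      intro i hi
      rw [eval_pow, eval_sub, eval_X, eval_C, abs_pow]
      apply pow_le_pow_left₀ (abs_nonneg _)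
      have hi' := Finset.mem_Icc.mp hi
      have hi1 : (1:ℝ) ≤ (i:ℝ) := by exact_mod_cast hi'.1
      have hin : (i:ℝ) ≤ (n:ℝ) := by exact_mod_cast hi'.2
      rw [abs_le]
      constructor <;> nlinarith
    calc ∏ i ∈ Icc 1 n, |((X - C (i:ℝ)) ^ q).eval t| ≤ ∏ i ∈ Icc 1 n, (n:ℝ) ^ q := by
          apply Finset.prod_le_prod (fun i _ => abs_nonneg _) this
      _ = ((n:ℝ) ^ q) ^ n := by rw [Finset.prod_const, Nat.card_Icc]; norm_num
  calc |t| ^ (q-1) * |∏ i ∈ Icc 1 n, ((X - C (i:ℝ)) ^ q).eval t|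
      ≤ (n:ℝ) ^ (q-1) * ((n:ℝ) ^ q) ^ n := by
        apply mul_le_mul h1 h2 (abs_nonneg _) (by positivity)
    _ = (n : ℝ) ^ (q - 1 + n * q) := by rw [← pow_mul, ← pow_add, mul_comm q n]

theorem aeval_exp_one_ne_zero_aux (p : Polynomial ℤ) (h0 : p.coeff 0 ≠ 0) :
    Polynomial.aeval (Real.exp 1) p ≠ 0 := by
  intro heval
  set n := p.natDegree with hn
  rcases Nat.eq_zero_or_pos n with hn0 | hnpos
  · rw [eq_C_of_natDegree_eq_zero hn0, aeval_C, algebraMap_int_eq, eq_intCast,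
      Int.cast_eq_zero] at heval
    exact h0 heval
  have hn1 : (1:ℝ) ≤ (n:ℝ) := by exact_mod_cast hnpos
  -- the vanishing sum
  have hsum0 : ∑ k ∈ range (n + 1), (p.coeff k : ℝ) * Real.exp k = 0 := by
    have h := Polynomial.aeval_eq_sum_range (R := ℤ) (p := p) (Real.exp 1)
    rw [heval] at h
    rw [← hn] at h
    have : ∀ k ∈ range (n+1), p.coeff k • Real.exp 1 ^ k = (p.coeff k : ℝ) * Real.exp k := by
      intro k _
      rw [zsmul_eq_mul, Real.exp_one_pow]
    rw [Finset.sum_congr rfl this] at h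
    linarith
  -- constants
  set C₀ : ℝ := (∑ k ∈ range (n + 1), |(p.coeff k : ℝ)|) * ((n : ℝ) * Real.exp n) with hC0
  have hC0nn : 0 ≤ C₀ := by positivity
  set x : ℝ := (n : ℝ) ^ (n + 1) with hx
  have hx1 : (1:ℝ) ≤ x := one_le_pow₀ hn1
  obtain ⟨j₀, hj₀⟩ := Filter.eventually_atTop.mp
    ((FloorSemiring.tendsto_pow_div_factorial_atTop x).eventually_lt_const
      (by positivity : (0:ℝ) < 1 / (C₀ * x + 1)))
  obtain ⟨q, hqge, hq⟩ :=
    Nat.exists_infinite_primes (max (max (n + 1) ((p.coeff 0).natAbs + 1)) (j₀ + 1))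
  have hqn : n < q := by have := le_of_max_le_left (le_of_max_le_left hqge); omega
  have hqa : (p.coeff 0).natAbs < q := by
    have := le_of_max_le_right (le_of_max_le_left hqge); omega
  have hqj : j₀ ≤ q - 1 := by have := le_of_max_le_right hqge; omega
  have hq1 : 0 < q := hq.pos
  -- integer bound
  have hint := hermite_int_bound n (fun k => p.coeff k) q hq hqn h0 hqa
  -- objects
  set F : Polynomial ℤ := X ^ (q - 1) * ∏ i ∈ Icc 1 n, (X - C (i : ℤ)) ^ q with hF
  set Fr : Polynomial ℝ := X ^ (q - 1) * ∏ i ∈ Icc 1 n, (X - C (i : ℝ)) ^ q with hFr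
  have hmap : F.map (Int.castRingHom ℝ) = Fr := by
    rw [hF, hFr, Polynomial.map_mul, Polynomial.map_pow, Polynomial.map_prod, map_X]
    congr 1
    refine Finset.prod_congr rfl (fun i _ => ?_)
    rw [Polynomial.map_pow, Polynomial.map_sub, map_X, map_C]
    norm_num
  have hSmap : (sumIDeriv F).map (Int.castRingHom ℝ) = sumIDeriv Fr := by
    rw [← hmap, sumIDeriv_map]
  have hevalk : ∀ k : ℕ, (((sumIDeriv F).eval (k : ℤ) : ℤ) : ℝ) = (sumIDeriv Fr).eval (k : ℝ) := by
    intro k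
    rw [← hSmap, eval_map]
    have := Polynomial.eval₂_at_natCast (p := sumIDeriv F) (Int.castRingHom ℝ) k
    simpa using this
  set M : ℝ := (n : ℝ) ^ (q - 1 + n * q) with hM
  have hMnn : 0 ≤ M := by positivity
  -- real value of N
  set N : ℤ := ∑ k ∈ range (n + 1), p.coeff k * (sumIDeriv F).eval (k : ℤ) with hNdef
  have hNr : (N : ℝ) = ∑ k ∈ range (n + 1), (p.coeff k : ℝ) * (sumIDeriv Fr).eval (k : ℝ) := by
    rw [hNdef]
    push_cast
    exact Finset.sum_congr rfl (fun k _ => by rw [hevalk k])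
  have hNr2 : (N : ℝ) = -∑ k ∈ range (n + 1), (p.coeff k : ℝ) *
      ∫ t in (0:ℝ)..(k : ℝ), Real.exp ((k : ℝ) - t) * Fr.eval t := by
    rw [hNr]
    have hterm : ∀ k ∈ range (n+1), (p.coeff k : ℝ) * (sumIDeriv Fr).eval (k : ℝ)
        = ((p.coeff k : ℝ) * Real.exp k) * (sumIDeriv Fr).eval 0
          - (p.coeff k : ℝ) * ∫ t in (0:ℝ)..(k : ℝ), Real.exp ((k : ℝ) - t) * Fr.eval t := by
      intro k _
      have hh := exp_poly_integral Fr (k : ℝ)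
      linear_combination (-(p.coeff k : ℝ)) * hh
    rw [Finset.sum_congr rfl hterm, Finset.sum_sub_distrib, ← Finset.sum_mul, hsum0, zero_mul,
      zero_sub]
  -- bound
  have hNb : |(N : ℝ)| ≤ C₀ * M := by
    rw [hNr2, abs_neg]
    calc |∑ k ∈ range (n+1), (p.coeff k : ℝ) *
        ∫ t in (0:ℝ)..(k : ℝ), Real.exp ((k : ℝ) - t) * Fr.eval t|
        ≤ ∑ k ∈ range (n+1), |(p.coeff k : ℝ) *
          ∫ t in (0:ℝ)..(k : ℝ), Real.exp ((k : ℝ) - t) * Fr.eval t| :=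
          Finset.abs_sum_le_sum_abs _ _
      _ ≤ ∑ k ∈ range (n+1), |(p.coeff k : ℝ)| * ((n : ℝ) * Real.exp n * M) := by
          apply Finset.sum_le_sum
          intro k hk
          rw [abs_mul]
          have hkn : (k : ℝ) ≤ (n : ℝ) := by
            have := Finset.mem_range.mp hk; exact_mod_cast Nat.lt_succ_iff.mp this
          have hkb : |∫ t in (0:ℝ)..(k : ℝ), Real.exp ((k : ℝ) - t) * Fr.eval t|
              ≤ Real.exp k * M * k := by
            apply exp_poly_integral_bound Fr (k : ℝ) M (Nat.cast_nonneg k)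
            intro t ht
            rw [hFr, hM]
            exact F_eval_bound n q hnpos t ht.1 (le_trans ht.2 hkn)
          have hek : Real.exp k ≤ Real.exp n := Real.exp_le_exp.mpr hkn
          have : Real.exp (k:ℕ) * M * (k:ℕ) ≤ (n : ℝ) * Real.exp n * M := by
            have h1 : (0:ℝ) ≤ (k:ℕ) := Nat.cast_nonneg k
            have h2 : Real.exp (k:ℕ) * (k:ℕ) ≤ Real.exp (n:ℕ) * (n:ℕ) :=
              mul_le_mul hek hkn h1 (Real.exp_pos _).le
            nlinarith [h2, hMnn]
          calc |(p.coeff k : ℝ)| * |∫ t in (0:ℝ)..(k : ℝ), Real.exp ((k : ℝ) - t) * Fr.eval t|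
              ≤ |(p.coeff k : ℝ)| * (Real.exp k * M * k) := by
                apply mul_le_mul_of_nonneg_left hkb (abs_nonneg _)
            _ ≤ |(p.coeff k : ℝ)| * ((n : ℝ) * Real.exp n * M) := by
                apply mul_le_mul_of_nonneg_left this (abs_nonneg _)
      _ = C₀ * M := by rw [← Finset.sum_mul, hC0]; ring
  -- combine
  have hfac : ((q - 1).factorial : ℝ) ≤ |(N : ℝ)| := by
    have : ((q - 1).factorial : ℤ) ≤ |N| := hint
    calc ((q - 1).factorial : ℝ) = (((q - 1).factorial : ℤ) : ℝ) := by push_cast; ring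
      _ ≤ (|N| : ℝ) := by exact_mod_cast this
      _ = |(N : ℝ)| := by push_cast; ring
  have hMx : M ≤ x ^ q := by
    rw [hM, hx, ← pow_mul]
    apply pow_le_pow_right₀ hn1
    have : 1 ≤ q := hq1
    calc q - 1 + n * q ≤ q + n * q := by omega
      _ = (n + 1) * q := by ring
  have hlt := hj₀ (q - 1) hqj
  have hfacpos : (0:ℝ) < ((q - 1).factorial : ℝ) := by exact_mod_cast Nat.factorial_pos _
  have hcross : x ^ (q - 1) * (C₀ * x + 1) < ((q - 1).factorial : ℝ) := by
    rw [div_lt_div_iff₀ hfacpos (by positivity : (0:ℝ) < C₀ * x + 1)] at hlt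
    linarith
  have hxq : x ^ q = x * x ^ (q - 1) := by
    rw [← pow_succ']
    congr 1
    omega
  have hxpow : (0:ℝ) < x ^ (q - 1) := by positivity
  have : C₀ * x ^ q < ((q - 1).factorial : ℝ) := by
    rw [hxq]
    nlinarith
  have : C₀ * M ≤ C₀ * x ^ q := mul_le_mul_of_nonneg_left hMx hC0nn
  linarith

theorem aeval_exp_one_ne_zero' (p : Polynomial ℤ) (hp : p ≠ 0) :
    Polynomial.aeval (Real.exp 1) p ≠ 0 := by
  set d := p.natTrailingDegree with hd
  have hdvd : X ^ d ∣ p := by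
    rw [X_pow_dvd_iff]
    intro i hi
    exact coeff_eq_zero_of_lt_natTrailingDegree hi
  obtain ⟨p₁, hp₁⟩ := hdvd
  have hco : p.coeff d = p₁.coeff 0 := by
    rw [hp₁]
    simpa using Polynomial.coeff_X_pow_mul p₁ d 0
  have ht : p.coeff p.natTrailingDegree ≠ 0 := by
    have := Polynomial.trailingCoeff_nonzero_iff_nonzero.mpr hp
    rwa [trailingCoeff] at this
  have hc : p₁.coeff 0 ≠ 0 := by
    intro hc0
    exact ht (by rw [← hd, hco, hc0])
  intro heval
  rw [hp₁, map_mul, map_pow, aeval_X] at heval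
  rcases mul_eq_zero.mp heval with h | h
  · exact pow_ne_zero d (Real.exp_ne_zero 1) h
  · exact aeval_exp_one_ne_zero_aux p₁ hc h

open Polynomial

noncomputable def Qp : List ℕ → Polynomial ℤ
  | [] => 1
  | a :: l => X ^ a + C (a : ℤ) * Qp l

@[simp] lemma Qp_nil : Qp [] = 1 := rfl
@[simp] lemma Qp_cons (a : ℕ) (l : List ℕ) : Qp (a :: l) = X ^ a + C (a : ℤ) * Qp l := rfl

lemma Qp_coeff_nonneg (l : List ℕ) (v : ℕ) : 0 ≤ (Qp l).coeff v := by
  induction l generalizing v with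
  | nil => simp [Qp, coeff_one]; positivity
  | cons a l ih =>
    simp only [Qp_cons, coeff_add, coeff_X_pow, coeff_C_mul]
    have := ih v
    positivity

lemma Qp_coeff_zero (l : List ℕ) (hl : ∀ i ∈ l, 2 ≤ i) : (Qp l).coeff 0 = (l.prod : ℤ) := by
  induction l with
  | nil => simp
  | cons a l ih =>
    have ha : a ≠ 0 := by have := hl a (by simp); omega
    simp [coeff_X_pow, ha, ih (fun i hi => hl i (by simp [hi])), Ne.symm ha]

lemma Qp_eval_one (l : List ℕ) (hl : ∀ i ∈ l, 2 ≤ i) :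
    (Qp l).eval 1 ≤ 2 * (l.prod : ℤ) - 1 := by
  induction l with
  | nil => simp
  | cons a l ih =>
    have ha : (2:ℤ) ≤ (a:ℤ) := by exact_mod_cast hl a (by simp)
    have hp : (1:ℤ) ≤ (l.prod : ℤ) := by
      have : 0 < l.prod := List.prod_pos (fun i hi => by have := hl i (by simp [hi]); omega)
      exact_mod_cast this
    have := ih (fun i hi => hl i (by simp [hi]))
    simp only [Qp_cons, eval_add, eval_pow, eval_X, eval_mul, eval_C, one_pow,
      List.prod_cons, Nat.cast_mul]
    nlinarith

lemma Qp_coeff_le (l : List ℕ) (hl : ∀ i ∈ l, 2 ≤ i) (v : ℕ) (hv : v ≠ 0) :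
    (Qp l).coeff v ≤ (Qp l).eval 1 - (Qp l).coeff 0 := by
  induction l generalizing v with
  | nil => simp [coeff_one, hv]
  | cons a l ih =>
    have ha : (0:ℤ) ≤ (a:ℤ) := by positivity
    have key := ih (fun i hi => hl i (by simp [hi])) v hv
    have h0 : (0:ℤ) ≤ (Qp l).coeff v := Qp_coeff_nonneg l v
    have ha0 : a ≠ 0 := by have := hl a (by simp); omega
    simp only [Qp_cons, coeff_add, coeff_X_pow, coeff_C_mul, eval_add, eval_pow, eval_X,
      eval_mul, eval_C, one_pow, if_neg (Ne.symm ha0)]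
    by_cases hva : v = a
    · simp only [if_pos hva]; nlinarith
    · simp only [if_neg hva]; nlinarith

lemma Qp_prod_pos (l : List ℕ) (hl : ∀ i ∈ l, 2 ≤ i) : (1:ℤ) ≤ (l.prod : ℤ) := by
  have : 0 < l.prod := List.prod_pos (fun i hi => by have := hl i hi; omega)
  exact_mod_cast this

lemma Qp_coeff_lt (l : List ℕ) (hl : ∀ i ∈ l, 2 ≤ i) (v : ℕ) (hv : v ≠ 0) :
    (Qp l).coeff v < (l.prod : ℤ) := by
  have h1 := Qp_coeff_le l hl v hv
  have h2 := Qp_eval_one l hl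
  have h3 := Qp_coeff_zero l hl
  omega

lemma Qp_concat (l : List ℕ) (a : ℕ) :
    Qp (l ++ [a]) = Qp l + C (l.prod : ℤ) * (X ^ a + C ((a : ℤ) - 1)) := by
  induction l with
  | nil =>
    simp only [List.nil_append, Qp_cons, Qp_nil, List.prod_nil, Nat.cast_one, map_one,
      one_mul, mul_one, map_sub]
    ring
  | cons b l ih =>
    rw [List.cons_append]
    simp only [Qp_cons, ih, List.prod_cons, Nat.cast_mul, C_mul]
    ring

lemma Qp_concat_coeff_self (l : List ℕ) (a : ℕ) (ha : a ≠ 0) :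
    (l.prod : ℤ) ≤ (Qp (l ++ [a])).coeff a := by
  have h := Qp_coeff_nonneg l a
  rw [Qp_concat]
  rw [coeff_add, coeff_C_mul, coeff_add, coeff_X_pow, coeff_C, if_pos rfl, if_neg ha]
  linarith

lemma Qp_concat_coeff_ne (l : List ℕ) (hl : ∀ i ∈ l, 2 ≤ i) (a : ℕ) (v : ℕ) (hv : v ≠ 0)
    (hva : v ≠ a) : (Qp (l ++ [a])).coeff v < (l.prod : ℤ) := by
  have h := Qp_coeff_lt l hl v hv
  rw [Qp_concat]
  rw [coeff_add, coeff_C_mul, coeff_add, coeff_X_pow, coeff_C, if_neg hva, if_neg hv]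
  linarith

lemma Qp_inj (ns : List ℕ) : ∀ ms : List ℕ, (∀ i ∈ ns, 2 ≤ i) → (∀ j ∈ ms, 2 ≤ j) →
    Qp ns = Qp ms → ns = ms := by
  induction ns using List.reverseRecOn with
  | nil =>
    intro ms _ hms h
    rcases ms.eq_nil_or_concat' with rfl | ⟨l, a, rfl⟩
    · rfl
    · exfalso
      have ha : a ≠ 0 := by have := hms a (by simp); omega
      have h1 := Qp_concat_coeff_self l a ha
      have hp := Qp_prod_pos l (fun i hi => hms i (by simp [hi]))
      rw [← h, Qp_nil, coeff_one, if_neg ha] at h1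
      linarith
  | append_singleton l a ih =>
    intro ms hns hms h
    have hl : ∀ i ∈ l, 2 ≤ i := fun i hi => hns i (by simp [hi])
    have ha : a ≠ 0 := by have := hns a (by simp); omega
    have hpl := Qp_prod_pos l hl
    rcases ms.eq_nil_or_concat' with rfl | ⟨m, b, rfl⟩
    · exfalso
      have h1 := Qp_concat_coeff_self l a ha
      rw [h, Qp_nil, coeff_one, if_neg ha] at h1
      linarith
    · have hm : ∀ i ∈ m, 2 ≤ i := fun i hi => hms i (by simp [hi])
      have hb : b ≠ 0 := by have := hms b (by simp); omega
      have hpm := Qp_prod_pos m hm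
      have hab : a = b := by
        by_contra hab
        have h1 := Qp_concat_coeff_self l a ha
        have h2 := Qp_concat_coeff_ne m hm b a ha hab
        have h3 := Qp_concat_coeff_self m b hb
        have h4 := Qp_concat_coeff_ne l hl a b hb (Ne.symm hab)
        rw [h] at h1 h4
        linarith
      subst hab
      have hc : (l ++ [a]).prod = (m ++ [a]).prod := by
        have h0 := congrArg (fun p => Polynomial.coeff p 0) h
        rw [Qp_coeff_zero _ hns, Qp_coeff_zero _ hms] at h0
        exact_mod_cast h0
      have hprod : l.prod = m.prod := by
        rw [List.prod_append, List.prod_append, List.prod_singleton] at hc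
        exact Nat.eq_of_mul_eq_mul_right (by omega) hc
      have hq : Qp l = Qp m := by
        have h2 := h
        rw [Qp_concat, Qp_concat, hprod] at h2
        exact add_right_cancel h2
      rw [ih m hl hm hq]

theorem aeval_exp_one_ne_zero (p : Polynomial ℤ) (hp : p ≠ 0) :
    Polynomial.aeval (Real.exp 1) p ≠ 0 := aeval_exp_one_ne_zero' p hp

lemma aeval_Qp (l : List ℕ) :
    Polynomial.aeval (Real.exp 1) (Qp l) =
      (l.prod : ℝ) + ∑ i ∈ Finset.range l.length,
        ((l.take i).prod : ℝ) * Real.exp (l.getD i 0) := by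
  induction l with
  | nil => simp
  | cons a l ih =>
    rw [List.length_cons, Finset.sum_range_succ', Qp_cons, map_add, map_pow, map_mul,
      aeval_X, aeval_C, Real.exp_one_pow, ih]
    simp only [List.take_succ_cons, List.getD_cons_succ, List.getD_cons_zero, List.take_zero,
      List.prod_nil, List.prod_cons, Nat.cast_one, one_mul, Nat.cast_mul, algebraMap_int_eq,
      eq_intCast, Int.cast_natCast]
    have hs : ∑ x ∈ Finset.range l.length,
        (a : ℝ) * ((l.take x).prod : ℝ) * Real.exp (l.getD x 0) =
        (a : ℝ) * ∑ x ∈ Finset.range l.length, ((l.take x).prod : ℝ) * Real.exp (l.getD x 0) := by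
      rw [Finset.mul_sum]
      exact Finset.sum_congr rfl (fun x _ => by ring)
    rw [hs]
    ring

theorem exp_size_injective' (ns ms : List ℕ)
    (hns : ∀ i ∈ ns, 2 ≤ i) (hms : ∀ j ∈ ms, 2 ≤ j)
    (h : (ns.prod : ℝ) +
          ∑ i ∈ Finset.range ns.length, ((ns.take i).prod : ℝ) * Real.exp (ns.getD i 0) =
        (ms.prod : ℝ) +
          ∑ j ∈ Finset.range ms.length, ((ms.take j).prod : ℝ) * Real.exp (ms.getD j 0)) :
    ns = ms := by
  have h1 : Polynomial.aeval (Real.exp 1) (Qp ns - Qp ms) = 0 := by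
    rw [map_sub, aeval_Qp, aeval_Qp, h, sub_self]
  have h2 : Qp ns - Qp ms = 0 := by
    by_contra hne
    exact aeval_exp_one_ne_zero _ hne h1
  exact Qp_inj ns ms hns hms (sub_eq_zero.mp h2)

/-- Non-isomorphic fully symmetric trees have different `eⁿ`-sizes: the map
`(n₁,…,n_k) ↦ n₁⋯n_k + Σᵢ (n₁⋯n_{i-1})·e^{nᵢ}` is injective on nonempty tuples of
integers `≥ 2`. -/
theorem exp_size_injective (ns ms : List ℕ) (hnse : ns ≠ []) (hmse : ms ≠ [])
    (hns : ∀ i ∈ ns, 2 ≤ i) (hms : ∀ j ∈ ms, 2 ≤ j)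
    (h : (ns.prod : ℝ) +
          ∑ i ∈ Finset.range ns.length, ((ns.take i).prod : ℝ) * Real.exp (ns.getD i 0) =
        (ms.prod : ℝ) +
          ∑ j ∈ Finset.range ms.length, ((ms.take j).prod : ℝ) * Real.exp (ms.getD j 0)) :
    ns = ms := exp_size_injective' ns ms hns hms h
end

section
/- For all integers k, l ≥ 1 and all integers n₁,…,n_k, m₁,…,m_l ≥ 2: if n₁⋯n_k + Σ_{i=1}^{k} (n₁⋯n_{i−1})·ln(nᵢ + e) = m₁⋯m_l + Σ_{j=1}^{l} (m₁⋯m_{j−1})·ln(m_j + e) (where the empty products n₁⋯n₀ and m₁⋯m₀ equal 1), then k = l and nᵢ = mᵢ for every i. In other words, the map (n₁,…,n_k) ↦ Δ_f(n₁,…,n_k) with f(n) = ln(n+e) is injective on tuples of integers ≥ 2; equivalently, non-isomorphic fully symmetric trees have different ln(n+e)-sizes. -/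
open Polynomial Real Finset

namespace LogSizeAux

/-- The tree polynomial. -/
noncomputable def Pol : List ℕ → ℤ[X]
  | [] => X
  | n :: t => (X + C (n : ℤ)) * (Pol t) ^ n

@[simp] lemma Pol_nil : Pol [] = X := rfl
@[simp] lemma Pol_cons (n : ℕ) (t : List ℕ) :
    Pol (n :: t) = (X + C (n : ℤ)) * (Pol t) ^ n := rfl

lemma Pol_monic : ∀ u : List ℕ, (Pol u).Monic
  | [] => monic_X
  | n :: t => by simpa using (monic_X_add_C (n:ℤ)).mul ((Pol_monic t).pow n)

lemma Pol_ne_zero (u : List ℕ) : Pol u ≠ 0 := (Pol_monic u).ne_zero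

/-- multiplicity bookkeeping -/
def mult (j : ℕ) : List ℕ → ℕ
  | [] => if j = 0 then 1 else 0
  | n :: t => (if j = n then 1 else 0) + n * mult j t

lemma rootMultiplicity_pow {a : ℤ} {q : ℤ[X]} (hq : q ≠ 0) (n : ℕ) :
    rootMultiplicity a (q ^ n) = n * rootMultiplicity a q := by
  induction n with
  | zero => simp
  | succ n ih =>
    rw [pow_succ, rootMultiplicity_mul (mul_ne_zero (pow_ne_zero _ hq) hq), ih]
    ring

lemma rootMult (j : ℕ) : ∀ u : List ℕ, rootMultiplicity (-(j : ℤ)) (Pol u) = mult j u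
  | [] => by
    have : (X : ℤ[X]) = X - C 0 := by simp
    rw [Pol_nil, mult, this, rootMultiplicity_X_sub_C]
    simp [neg_eq_zero]
  | n :: t => by
    have h1 : (X + C (n : ℤ)) = X - C (-(n : ℤ)) := by rw [map_neg, sub_neg_eq_add]
    rw [Pol_cons, mult, rootMultiplicity_mul
        (mul_ne_zero (by rw [h1]; exact X_sub_C_ne_zero _) (pow_ne_zero _ (Pol_ne_zero t))),
      h1, rootMultiplicity_X_sub_C, rootMultiplicity_pow (Pol_ne_zero t), rootMult j t]
    have hiff : (-(j : ℤ) = -(n : ℤ)) ↔ j = n := by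
      rw [neg_inj]; exact_mod_cast Iff.rfl
    rw [if_congr hiff rfl rfl]


lemma mult_zero : ∀ u : List ℕ, (∀ i ∈ u, 2 ≤ i) → mult 0 u = u.prod
  | [], _ => by simp [mult]
  | n :: t, hu => by
    have hn : 2 ≤ n := hu n List.mem_cons_self
    rw [mult, mult_zero t (fun i hi => hu i (List.mem_cons_of_mem _ hi)), List.prod_cons,
      if_neg (by omega)]
    omega

lemma prod_pos (u : List ℕ) (hu : ∀ i ∈ u, 2 ≤ i) : 1 ≤ u.prod := by
  induction u with
  | nil => simp
  | cons n t ih =>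
    have := hu n List.mem_cons_self
    have ht := ih (fun i hi => hu i (List.mem_cons_of_mem _ hi))
    rw [List.prod_cons]
    exact le_trans ht (by nlinarith)

lemma mult_lt (j : ℕ) (hj : j ≠ 0) : ∀ u : List ℕ, (∀ i ∈ u, 2 ≤ i) →
    mult j u + 1 ≤ u.prod
  | [], _ => by simp [mult, hj]
  | n :: t, hu => by
    have hn : 2 ≤ n := hu n List.mem_cons_self
    have ht := mult_lt j hj t (fun i hi => hu i (List.mem_cons_of_mem _ hi))
    have hp := prod_pos t (fun i hi => hu i (List.mem_cons_of_mem _ hi))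
    rw [mult, List.prod_cons]
    have : (if j = n then 1 else 0) ≤ 1 := by split <;> omega
    nlinarith [this]

lemma mult_concat (j z : ℕ) (hz : 1 ≤ z) : ∀ t : List ℕ,
    mult j (t ++ [z]) = mult j t + (if j = z then t.prod else 0)
      + (if j = 0 then (z - 1) * t.prod else 0)
  | [] => by
    have hz0 : ¬ (0:ℕ) = z := by omega
    have hz0' : ¬ z = 0 := by omega
    by_cases h0 : j = 0 <;> by_cases hjz : j = z <;>
      simp [mult, h0, hjz, hz0, hz0'] <;> omega
  | n :: t => by
    have hz0 : ¬ (0:ℕ) = z := by omega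
    have hz0' : ¬ z = 0 := by omega
    rw [List.cons_append, mult, mult, mult_concat j z hz t, List.prod_cons]
    by_cases h0 : j = 0 <;> by_cases hjz : j = z <;>
      simp [h0, hjz, hz0, hz0'] <;> try ring

lemma prod_eq_one_iff (u : List ℕ) (hu : ∀ i ∈ u, 2 ≤ i) : u.prod = 1 → u = [] := by
  intro h
  cases u with
  | nil => rfl
  | cons n t =>
    exfalso
    have hn : 2 ≤ n := hu n List.mem_cons_self
    have hp := prod_pos t (fun i hi => hu i (List.mem_cons_of_mem _ hi))
    rw [List.prod_cons] at h
    nlinarith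

lemma comb (u : List ℕ) : ∀ v : List ℕ, (∀ i ∈ u, 2 ≤ i) → (∀ i ∈ v, 2 ≤ i) →
    (∀ j, mult j u = mult j v) → u = v := by
  induction u using List.reverseRecOn with
  | nil =>
    intro v _ hv hm
    have h0 := hm 0
    rw [mult_zero [] (by simp), mult_zero v hv] at h0
    exact (prod_eq_one_iff v hv h0.symm).symm
  | append_singleton t z ih =>
    intro v hu hv hm
    have hz : 2 ≤ z := hu z (by simp)
    have ht : ∀ i ∈ t, 2 ≤ i := fun i hi => hu i (by simp [hi])
    have hprod : (t ++ [z]).prod = v.prod := by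
      rw [← mult_zero _ hu, ← mult_zero _ hv, hm 0]
    rcases v.eq_nil_or_concat with rfl | ⟨s, w, rfl⟩
    · exfalso
      have : (t ++ [z]).prod = 1 := by simpa using hprod
      have hpt := prod_pos t ht
      rw [List.prod_append, List.prod_cons, List.prod_nil] at this
      nlinarith
    · rw [List.concat_eq_append] at hv hm hprod ⊢
      have hw : 2 ≤ w := hv w (by simp)
      have hs : ∀ i ∈ s, 2 ≤ i := fun i hi => hv i (by simp [hi])
      have hpt := prod_pos t ht
      have hps := prod_pos s hs
      have hPu : (t ++ [z]).prod = t.prod * z := by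
        rw [List.prod_append, List.prod_cons, List.prod_nil, mul_one]
      have hPv : (s ++ [w]).prod = s.prod * w := by
        rw [List.prod_append, List.prod_cons, List.prod_nil, mul_one]
      -- first show z = w
      have hzw : z = w := by
        by_contra hzw
        have h1 := hm z
        rw [mult_concat z z (by omega) t, mult_concat z w (by omega) s] at h1
        rw [if_pos rfl, if_neg hzw, if_neg (by omega), if_neg (by omega)] at h1
        have h1' : t.prod ≤ mult z s := by omega
        have h2 := hm w
        rw [mult_concat w z (by omega) t, mult_concat w w (by omega) s] at h2
        rw [if_pos rfl, if_neg (fun e => hzw e.symm), if_neg (by omega),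
          if_neg (by omega)] at h2
        have h2' : s.prod ≤ mult w t := by omega
        have l1 := mult_lt z (by omega) s hs
        have l2 := mult_lt w (by omega) t ht
        omega
      subst hzw
      have hpp : t.prod = s.prod := by
        rw [hPu, hPv] at hprod
        exact Nat.eq_of_mul_eq_mul_right (by omega) hprod
      have key : ∀ j, mult j t = mult j s := by
        intro j
        have := hm j
        rw [mult_concat j z (by omega) t, mult_concat j z (by omega) s, hpp] at this
        omega
      rw [ih s ht hs key]

noncomputable def Del : List ℕ → ℝ
  | [] => 1
  | n :: t => Real.log ((n : ℝ) + Real.exp 1) + n * Del t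

lemma sum_eq_Del : ∀ u : List ℕ,
    (u.prod : ℝ) + ∑ i ∈ Finset.range u.length,
      ((u.take i).prod : ℝ) * Real.log ((u.getD i 0 : ℝ) + Real.exp 1) = Del u
  | [] => by simp [Del]
  | n :: t => by
    rw [List.length_cons, Finset.sum_range_succ']
    have h0 : (((n :: t).take 0).prod : ℝ) *
        Real.log (((n :: t).getD 0 0 : ℝ) + Real.exp 1)
        = Real.log ((n : ℝ) + Real.exp 1) := by simp
    have hstep : ∀ i, (((n :: t).take (i + 1)).prod : ℝ) *
        Real.log (((n :: t).getD (i + 1) 0 : ℝ) + Real.exp 1)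
        = (n : ℝ) * (((t.take i).prod : ℝ) * Real.log ((t.getD i 0 : ℝ) + Real.exp 1)) := by
      intro i
      simp only [List.take_succ_cons, List.getD_cons_succ, List.prod_cons]
      push_cast
      ring
    rw [h0]
    simp only [hstep, List.length_cons, List.prod_cons]
    rw [← Finset.mul_sum, Del, ← sum_eq_Del t]
    push_cast
    ring

lemma aeval_Pol : ∀ u : List ℕ, (aeval (Real.exp 1) (Pol u) : ℝ) = Real.exp (Del u)
  | [] => by simp [Del]
  | n :: t => by
    have hpos : (0 : ℝ) < (n : ℝ) + Real.exp 1 := by positivity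
    rw [Pol_cons, map_mul, map_pow, aeval_Pol t, Del]
    rw [Real.exp_add, ← Real.exp_nat_mul, Real.exp_log hpos]
    simp only [map_add, aeval_X, aeval_C]
    push_cast
    ring

lemma factorial_dvd_eval (g : ℤ[X]) (j : ℕ) (k : ℤ) :
    (j.factorial : ℤ) ∣ (derivative^[j] g).eval k := by
  rw [iterate_derivative_eq_factorial_smul_sum, nsmul_eq_mul, eval_mul, eval_natCast]
  exact Dvd.intro _ rfl

lemma pow_dvd_iterate_derivative (r : ℤ) (s : ℕ) (g : ℤ[X])
    (hg : (X - C r) ^ s ∣ g) : ∀ j, (X - C r) ^ (s - j) ∣ derivative^[j] g := by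
  intro j
  induction j with
  | zero => simpa using hg
  | succ j ih =>
    obtain ⟨u, hu⟩ := ih
    rw [Function.iterate_succ_apply', hu, derivative_mul, derivative_X_sub_C_pow]
    rw [← Nat.sub_sub]
    apply dvd_add
    · exact dvd_mul_of_dvd_left (dvd_mul_left _ _) u
    · exact dvd_mul_of_dvd_left (pow_dvd_pow _ (Nat.sub_le _ 1)) _

lemma eval_eq_zero_of_dvd {r : ℤ} {m : ℕ} (hm : m ≠ 0) {q u : ℤ[X]}
    (h : q = (X - C r) ^ m * u) : q.eval r = 0 := by
  rw [h, eval_mul, eval_pow, eval_sub, eval_X, eval_C, sub_self, zero_pow hm, zero_mul]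

lemma eval_zero_iterate (g : ℤ[X]) (j : ℕ) :
    (derivative^[j] g).eval 0 = (j.factorial : ℤ) * g.coeff j := by
  rw [← coeff_zero_eq_eval_zero, coeff_iterate_derivative, nsmul_eq_mul]
  simp [Nat.descFactorial_self]

lemma derivative_sumIter (f : ℤ[X]) (D : ℕ) (hD : f.natDegree < D) :
    derivative (∑ j ∈ range D, derivative^[j] f)
      = (∑ j ∈ range D, derivative^[j] f) - f := by
  rw [map_sum]
  have h1 : ∀ j, derivative (derivative^[j] f) = derivative^[j + 1] f :=
    fun j => (Function.iterate_succ_apply' _ _ _).symm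
  simp_rw [h1]
  have h2 := Finset.sum_range_succ' (fun j => derivative^[j] f) D
  rw [Finset.sum_range_succ] at h2
  have hz : derivative^[D] f = 0 := iterate_derivative_eq_zero hD
  rw [hz] at h2
  simp only [Function.iterate_zero_apply, add_zero] at h2
  exact eq_sub_of_add_eq h2.symm

lemma hasDeriv_aux (F f : ℝ[X]) (hFf : derivative F = F - f) (x : ℝ) :
    HasDerivAt (fun y => -(Real.exp (-y) * F.eval y)) (Real.exp (-x) * f.eval x) x := by
  have h1 : HasDerivAt (fun y : ℝ => Real.exp (-y)) (-Real.exp (-x)) x := by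
    exact ((Real.hasDerivAt_exp (-x)).comp x (hasDerivAt_neg x)).congr_deriv (by ring)
  have h2 : HasDerivAt (fun y => F.eval y) ((derivative F).eval x) x := F.hasDerivAt x
  have h3 := (h1.mul h2).neg
  refine h3.congr_deriv ?_
  rw [hFf, eval_sub]
  ring

lemma integral_identity (F f : ℝ[X]) (hFf : derivative F = F - f) (t : ℝ) :
    ∫ x in (0:ℝ)..t, Real.exp (-x) * f.eval x
      = F.eval 0 - Real.exp (-t) * F.eval t := by
  have hint : IntervalIntegrable (fun x => Real.exp (-x) * f.eval x)
      MeasureTheory.volume 0 t :=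
    (((Real.continuous_exp.comp continuous_neg)).mul f.continuous).intervalIntegrable 0 t
  have h := intervalIntegral.integral_eq_sub_of_hasDerivAt
    (f := fun y => -(Real.exp (-y) * F.eval y))
    (f' := fun x => Real.exp (-x) * f.eval x)
    (fun x _ => hasDeriv_aux F f hFf x) hint
  rw [h]
  simp [Real.exp_zero]
  ring


set_option maxHeartbeats 3000000 in
lemma core (g : ℤ[X]) (hg0 : g.coeff 0 ≠ 0) : (aeval (Real.exp 1)) g ≠ 0 := by
  intro Heq
  set n := g.natDegree with hn
  rcases Nat.eq_zero_or_pos n with hn0 | hnpos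
  · have hgC : g = C (g.coeff 0) := g.eq_C_of_natDegree_eq_zero hn0
    rw [hgC, aeval_C, algebraMap_int_eq, eq_intCast, Int.cast_eq_zero] at Heq
    exact hg0 Heq
  -- the hypothetical integer relation among powers of e
  have Hsum : ∑ k ∈ range (n + 1), (g.coeff k : ℝ) * Real.exp k = 0 := by
    rw [Polynomial.aeval_eq_sum_range (Real.exp 1)] at Heq
    rw [← Heq]
    refine Finset.sum_congr rfl (fun k _ => ?_)
    rw [zsmul_eq_mul, ← Real.exp_nat_mul, mul_one]
  -- constants
  set A : ℝ := ∑ k ∈ range (n + 1), |(g.coeff k : ℝ)| with hA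
  set Mx : ℝ := (n : ℝ) ^ (n + 1) with hMx
  have hn1 : (1:ℝ) ≤ (n:ℝ) := by exact_mod_cast hnpos
  have hMx1 : (1:ℝ) ≤ Mx := one_le_pow₀ hn1
  have hA1 : (1:ℝ) ≤ A := by
    rw [hA]
    have h1 : (1:ℝ) ≤ |(g.coeff 0 : ℝ)| := by
      rw [← Int.cast_abs]
      exact_mod_cast Int.one_le_abs hg0
    exact le_trans h1 (Finset.single_le_sum (f := fun k => |(g.coeff k : ℝ)|)
      (fun k _ => abs_nonneg _) (Finset.mem_range.mpr (by omega)))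
  set C0 : ℝ := A * Real.exp n * n with hC0
  have hC0pos : (0:ℝ) < C0 := by
    rw [hC0]
    have h1 : (0:ℝ) < A := lt_of_lt_of_le one_pos hA1
    have h2 : (0:ℝ) < (n:ℝ) := lt_of_lt_of_le one_pos hn1
    exact mul_pos (mul_pos h1 (Real.exp_pos _)) h2
  -- choose a large prime
  have hev : ∀ᶠ m in Filter.atTop, Mx ^ m / (m.factorial : ℝ) < (C0 * Mx + 1)⁻¹ :=
    (FloorSemiring.tendsto_pow_div_factorial_atTop (K := ℝ) Mx).eventually
      (gt_mem_nhds (by positivity))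
  obtain ⟨Np, hNp⟩ := Filter.eventually_atTop.mp hev
  obtain ⟨p, hple, hp⟩ := Nat.exists_infinite_primes
      (max (Np + 1) (max (n + 1) ((g.coeff 0).natAbs + 1)))
  have hple1 : Np + 1 ≤ p := le_trans (le_max_left _ _) hple
  have hple2 : n + 1 ≤ p := le_trans (le_trans (le_max_left _ _) (le_max_right _ _)) hple
  have hple3 : (g.coeff 0).natAbs + 1 ≤ p :=
    le_trans (le_trans (le_max_right _ _) (le_max_right _ _)) hple
  have hp2 : 2 ≤ p := hp.two_le
  -- the auxiliary polynomial
  set hh : ℤ[X] := ∏ i ∈ range n, (X - C ((i : ℤ) + 1)) ^ p with hhh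
  set f : ℤ[X] := X ^ (p - 1) * hh with hfd
  set D : ℕ := (n + 1) * p with hD
  have hdegf : f.natDegree < D := by
    have h1 : f.natDegree ≤ (p - 1) + hh.natDegree :=
      natDegree_mul_le.trans (by rw [natDegree_X_pow])
    have h2 : hh.natDegree ≤ n * p := by
      rw [hhh]
      refine le_trans (natDegree_prod_le _ _) ?_
      have hterm : ∀ i ∈ range n, ((X - C ((i:ℤ)+1)) ^ p).natDegree ≤ p := by
        intro i _
        exact (natDegree_pow_le).trans (by rw [natDegree_X_sub_C, mul_one])
      calc ∑ i ∈ range n, ((X - C ((i:ℤ)+1)) ^ p).natDegree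
          ≤ ∑ _i ∈ range n, p := Finset.sum_le_sum (f := fun i : ℕ => ((X - C ((i:ℤ)+1)) ^ p).natDegree) (g := fun _ => p) hterm
        _ = n * p := by rw [Finset.sum_const, Finset.card_range, smul_eq_mul]
    have h3 : D = n * p + p := by rw [hD]; ring
    omega
  set F : ℤ[X] := ∑ j ∈ range D, derivative^[j] f with hF
  -- arithmetic: divisibility for the terms with k ≥ 1
  have hdvd1 : ∀ k : ℕ, 1 ≤ k → k ≤ n → (p.factorial : ℤ) ∣ F.eval (k : ℤ) := by
    intro k hk1 hkn
    rw [hF, eval_finset_sum]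
    refine Finset.dvd_sum (fun j _ => ?_)
    rcases lt_or_ge j p with hjp | hjp
    · have hdvdf : (X - C (k : ℤ)) ^ p ∣ f := by
        have hmem : k - 1 ∈ range n := by
          rw [Finset.mem_range]; omega
        have hd : (X - C (((k - 1 : ℕ) : ℤ) + 1)) ^ p ∣ hh :=
          Finset.dvd_prod_of_mem _ hmem
        have hcast : (((k - 1 : ℕ) : ℤ) + 1) = (k : ℤ) := by push_cast; omega
        rw [hcast] at hd
        exact hd.mul_left _
      obtain ⟨u, hu⟩ := pow_dvd_iterate_derivative _ _ _ hdvdf j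
      rw [eval_eq_zero_of_dvd (by omega : p - j ≠ 0) hu]
      exact dvd_zero _
    · exact dvd_trans (Int.natCast_dvd_natCast.mpr (Nat.factorial_dvd_factorial hjp))
        (factorial_dvd_eval f j _)
  -- arithmetic: the term with k = 0
  have hc0 : f.coeff (p - 1) = hh.eval 0 := by
    have h1 := coeff_X_pow_mul hh (p - 1) 0
    rw [zero_add] at h1
    rw [hfd, h1, coeff_zero_eq_eval_zero]
  have hdvd0 : ∃ R : ℤ, F.eval 0 = ((p - 1).factorial : ℤ) * hh.eval 0
      + (p.factorial : ℤ) * R := by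
    have hmem : p - 1 ∈ range D := by
      rw [Finset.mem_range]
      have : p ≤ (n + 1) * p := Nat.le_mul_of_pos_left p (by omega)
      omega
    have hsum0 : F.eval 0 = (derivative^[p-1] f).eval 0
        + ∑ j ∈ (range D).erase (p - 1), (derivative^[j] f).eval 0 := by
      rw [hF, eval_finset_sum, ← Finset.add_sum_erase _ _ hmem]
    have hrest : (p.factorial : ℤ) ∣ ∑ j ∈ (range D).erase (p - 1),
        (derivative^[j] f).eval 0 := by
      refine Finset.dvd_sum (fun j hj => ?_)
      have hjne : j ≠ p - 1 := Finset.ne_of_mem_erase hj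
      rcases lt_or_ge j p with hjp | hjp
      · have hXdvd : (X - C (0:ℤ)) ^ (p - 1) ∣ f := by
          rw [hfd]
          have : (X - C (0:ℤ)) = X := by simp
          rw [this]
          exact dvd_mul_right _ _
        obtain ⟨u, hu⟩ := pow_dvd_iterate_derivative _ _ _ hXdvd j
        rw [eval_eq_zero_of_dvd (by omega : p - 1 - j ≠ 0) hu]
        exact dvd_zero _
      · exact dvd_trans (Int.natCast_dvd_natCast.mpr (Nat.factorial_dvd_factorial hjp))
          (factorial_dvd_eval f j _)
    obtain ⟨R, hR⟩ := hrest
    exact ⟨R, by rw [hsum0, hR, eval_zero_iterate, hc0]⟩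
  obtain ⟨R, hR⟩ := hdvd0
  -- the integer Z
  set Z : ℤ := ∑ k ∈ range (n + 1), g.coeff k * F.eval (k : ℤ) with hZ
  have hsplit : Z = ∑ k ∈ range n, g.coeff (k+1) * F.eval ((k+1 : ℕ) : ℤ)
      + g.coeff 0 * F.eval 0 := by
    rw [hZ, Finset.sum_range_succ']
    norm_num
  have hsumdvd : (p.factorial : ℤ) ∣ ∑ k ∈ range n, g.coeff (k+1) * F.eval ((k+1 : ℕ) : ℤ) := by
    refine Finset.dvd_sum (fun k hk => ?_)
    have hkr := Finset.mem_range.mp hk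
    exact Dvd.dvd.mul_left (hdvd1 (k+1) (by omega) (by omega)) _
  obtain ⟨S, hS⟩ := hsumdvd
  have hfactN : p.factorial = p * (p - 1).factorial := by
    conv_lhs => rw [show p = p - 1 + 1 by omega]
    rw [Nat.factorial_succ]
    congr 2
    omega
  have hfact : (p.factorial : ℤ) = (p : ℤ) * ((p - 1).factorial : ℤ) := by
    rw [hfactN]; push_cast; ring
  set W : ℤ := g.coeff 0 * hh.eval 0 + p * (S + g.coeff 0 * R) with hW
  have hZW : Z = ((p-1).factorial : ℤ) * W := by
    rw [hsplit, hS, hR, hfact, hW]; ring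
  -- p does not divide W
  have hprime : Prime (p : ℤ) := Nat.prime_iff_prime_int.mp hp
  have hpc0 : ¬ (p : ℤ) ∣ hh.eval 0 := by
    have heval : hh.eval 0 = ∏ i ∈ range n, (-((i : ℤ) + 1)) ^ p := by
      rw [hhh, eval_prod]
      refine Finset.prod_congr rfl (fun i _ => ?_)
      rw [eval_pow, eval_sub, eval_X, eval_C]
      ring_nf
    intro hdvd
    rw [heval] at hdvd
    obtain ⟨i, hi, hdvd2⟩ := hprime.exists_mem_finset_dvd hdvd
    have h3 : (p:ℤ) ∣ -((i:ℤ)+1) := hprime.dvd_of_dvd_pow hdvd2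
    have h4 : (p:ℤ) ∣ ((i:ℤ)+1) := (dvd_neg).mp h3
    have h5 := Int.le_of_dvd (by positivity) h4
    have h6 := Finset.mem_range.mp hi
    have : (p:ℤ) ≤ (n:ℤ) := by
      have : (i:ℤ) + 1 ≤ (n:ℤ) := by exact_mod_cast h6
      omega
    have : p ≤ n := by exact_mod_cast this
    omega
  have hpa0 : ¬ (p : ℤ) ∣ g.coeff 0 := by
    intro hdvd
    have h1 : p ∣ (g.coeff 0).natAbs := by
      have := Int.natAbs_dvd_natAbs.mpr hdvd
      simpa using this
    have h2 : (g.coeff 0).natAbs ≠ 0 := Int.natAbs_ne_zero.mpr hg0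
    have := Nat.le_of_dvd (by omega) h1
    omega
  have hWne : W ≠ 0 := by
    intro hW0
    have : (p:ℤ) ∣ W := by rw [hW0]; exact dvd_zero _
    rw [hW] at this
    have h2 : (p:ℤ) ∣ (p:ℤ) * (S + g.coeff 0 * R) := Dvd.intro _ rfl
    have h1 : (p:ℤ) ∣ g.coeff 0 * hh.eval 0 := (dvd_add_left h2).mp this
    rcases hprime.dvd_mul.mp h1 with h | h
    · exact hpa0 h
    · exact hpc0 h
  have hZlow : ((p - 1).factorial : ℤ) ≤ |Z| := by
    rw [hZW, abs_mul]
    have h1 : (1:ℤ) ≤ |W| := Int.one_le_abs hWne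
    have h2 : (0:ℤ) ≤ ((p-1).factorial : ℤ) := by positivity
    rw [abs_of_nonneg h2]
    nlinarith
  -- analytic side
  set fR : ℝ[X] := f.map (Int.castRingHom ℝ) with hfR
  set FR : ℝ[X] := F.map (Int.castRingHom ℝ) with hFRd
  have hdF : derivative F = F - f := derivative_sumIter f D hdegf
  have hFRder : derivative FR = FR - fR := by
    rw [hFRd, derivative_map, hdF, Polynomial.map_sub, ← hFRd, ← hfR]
  have hIbound : ∀ k : ℕ, k ≤ n →
      |FR.eval (k:ℝ) - Real.exp k * FR.eval 0|
        ≤ Real.exp n * ((n:ℝ) ^ ((n+1)*p) * n) := by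
    intro k hk
    have hid := integral_identity FR fR hFRder (k : ℝ)
    have hnorm : ‖∫ x in (0:ℝ)..(k:ℝ), Real.exp (-x) * fR.eval x‖
        ≤ ((n:ℝ) ^ ((n+1)*p)) * |(k:ℝ) - 0| := by
      apply intervalIntegral.norm_integral_le_of_norm_le_const
      intro x hx
      rw [Set.uIoc_of_le (by positivity : (0:ℝ) ≤ (k:ℝ))] at hx
      obtain ⟨hx0, hxk⟩ := hx
      have hkn : (k:ℝ) ≤ (n:ℝ) := by exact_mod_cast hk
      have hxn : x ≤ (n:ℝ) := le_trans hxk hkn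
      have h1 : Real.exp (-x) ≤ 1 := by
        rw [← Real.exp_zero]
        exact Real.exp_le_exp.mpr (by linarith)
      have hfRx : fR.eval x = x ^ (p-1) * ∏ i ∈ range n, (x - ((i:ℝ)+1)) ^ p := by
        rw [hfR, hfd, hhh]
        rw [Polynomial.map_mul, Polynomial.map_pow, Polynomial.map_X, Polynomial.map_prod]
        simp only [Polynomial.map_pow, Polynomial.map_sub, Polynomial.map_X,
          Polynomial.map_add, map_C]
        rw [eval_mul, eval_pow, eval_X, eval_prod]
        congr 1
        refine Finset.prod_congr rfl (fun i _ => ?_)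
        rw [eval_pow, eval_sub, eval_X, eval_C]
        simp only [Int.coe_castRingHom]
        push_cast
        ring
      have h2 : |fR.eval x| ≤ (n:ℝ) ^ ((n+1)*p) := by
        rw [hfRx, abs_mul, abs_pow, Finset.abs_prod]
        simp only [abs_pow]
        have e1 : |x| ^ (p-1) ≤ (n:ℝ)^(p-1) :=
          pow_le_pow_left₀ (abs_nonneg x)
            (by rw [abs_of_nonneg (le_of_lt hx0)]; linarith) _
        have e2 : ∏ i ∈ range n, |(x - ((i:ℝ)+1))| ^ p
            ≤ ∏ i ∈ range n, (n:ℝ) ^ p := by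
          refine Finset.prod_le_prod (fun i _ => by positivity) (fun i hi => ?_)
          refine pow_le_pow_left₀ (abs_nonneg _) ?_ p
          have h6 : (i:ℝ) + 1 ≤ (n:ℝ) := by
            exact_mod_cast Nat.succ_le_of_lt (Finset.mem_range.mp hi)
          rw [abs_le]
          constructor <;> [linarith; linarith]
        have e3 : ∏ i ∈ range n, ((n:ℝ)) ^ p = (n:ℝ) ^ (p * n) := by
          rw [Finset.prod_const, Finset.card_range, ← pow_mul]
        have e4 : (n:ℝ)^(p-1) * (n:ℝ)^(p*n) ≤ (n:ℝ)^((n+1)*p) := by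
          rw [← pow_add]
          exact pow_le_pow_right₀ hn1 (by
            have ha : p * n = n * p := Nat.mul_comm _ _
            have hb : (n+1) * p = n * p + p := by ring
            omega)
        calc |x| ^ (p-1) * ∏ i ∈ range n, |x - ((i:ℝ)+1)| ^ p
            ≤ (n:ℝ)^(p-1) * (n:ℝ)^(p*n) := by
              refine mul_le_mul e1 (le_trans e2 (le_of_eq e3)) ?_ (by positivity)
              exact Finset.prod_nonneg (fun i _ => by positivity)
          _ ≤ (n:ℝ)^((n+1)*p) := e4
      have : ‖Real.exp (-x) * fR.eval x‖ = Real.exp (-x) * |fR.eval x| := by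
        rw [norm_mul, Real.norm_eq_abs, Real.norm_eq_abs,
          abs_of_pos (Real.exp_pos _)]
      rw [this]
      nlinarith [abs_nonneg (fR.eval x), Real.exp_pos (-x)]
    -- turn the integral identity into the bound
    have hexpk : Real.exp (k:ℝ) * Real.exp (-(k:ℝ)) = 1 := by
      rw [← Real.exp_add]; simp
    have hrw : FR.eval (k:ℝ) - Real.exp k * FR.eval 0
        = -(Real.exp k * (∫ x in (0:ℝ)..(k:ℝ), Real.exp (-x) * fR.eval x)) := by
      rw [hid]
      linear_combination (-(FR.eval (k:ℝ))) * hexpk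
    rw [hrw, abs_neg, abs_mul, abs_of_pos (Real.exp_pos _)]
    rw [Real.norm_eq_abs] at hnorm
    have hek : Real.exp (k:ℝ) ≤ Real.exp (n:ℝ) :=
      Real.exp_le_exp.mpr (by exact_mod_cast hk)
    have hkn' : |(k:ℝ) - 0| ≤ (n:ℝ) := by
      rw [sub_zero, abs_of_nonneg (by positivity)]
      exact_mod_cast hk
    have h8 : |∫ x in (0:ℝ)..(k:ℝ), Real.exp (-x) * fR.eval x|
        ≤ (n:ℝ) ^ ((n+1)*p) * (n:ℝ) := by
      refine le_trans hnorm ?_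
      have h9 : (0:ℝ) ≤ (n:ℝ)^((n+1)*p) := by positivity
      nlinarith
    exact mul_le_mul hek h8 (abs_nonneg _) (Real.exp_pos _).le
  -- identify Z with the weighted sum of FR values
  have hcast : ∀ k : ℕ, FR.eval ((k:ℕ):ℝ) = ((F.eval ((k:ℕ):ℤ) : ℤ) : ℝ) := by
    intro k
    rw [hFRd]
    have h9 : ((k:ℕ):ℝ) = (((k:ℕ):ℤ) : ℝ) := by push_cast; rfl
    rw [h9, Polynomial.eval_intCast_map]
    simp
  have hZr : (Z : ℝ) = ∑ k ∈ range (n+1),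
      (g.coeff k : ℝ) * (FR.eval (k:ℝ) - Real.exp k * FR.eval 0) := by
    have expand : ∑ k ∈ range (n+1),
        (g.coeff k:ℝ) * (FR.eval (k:ℝ) - Real.exp k * FR.eval 0)
        = (∑ k ∈ range (n+1), (g.coeff k:ℝ) * FR.eval (k:ℝ))
          - (∑ k ∈ range (n+1), (g.coeff k:ℝ) * Real.exp k) * FR.eval 0 := by
      rw [Finset.sum_mul, ← Finset.sum_sub_distrib]
      exact Finset.sum_congr rfl (fun k _ => by ring)
    rw [expand, Hsum, zero_mul, sub_zero, hZ]
    push_cast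
    refine Finset.sum_congr rfl (fun k _ => ?_)
    rw [hcast k]
  have habs : |(Z:ℝ)| ≤ C0 * Mx ^ p := by
    rw [hZr]
    calc |∑ k ∈ range (n+1), (g.coeff k : ℝ) * (FR.eval (k:ℝ) - Real.exp k * FR.eval 0)|
        ≤ ∑ k ∈ range (n+1), |(g.coeff k : ℝ) * (FR.eval (k:ℝ) - Real.exp k * FR.eval 0)| :=
          Finset.abs_sum_le_sum_abs _ _
      _ ≤ ∑ k ∈ range (n+1), |(g.coeff k : ℝ)| * (Real.exp n * ((n:ℝ) ^ ((n+1)*p) * n)) := by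
          refine Finset.sum_le_sum (fun k hk => ?_)
          rw [abs_mul]
          exact mul_le_mul_of_nonneg_left
            (hIbound k (Nat.lt_succ_iff.mp (Finset.mem_range.mp hk))) (abs_nonneg _)
      _ = C0 * Mx ^ p := by
          rw [← Finset.sum_mul, ← hA, hC0, hMx, ← pow_mul]
          ring
  -- the contradiction
  have hcomp : ((p-1).factorial : ℝ) ≤ C0 * Mx ^ p := by
    calc ((p-1).factorial : ℝ) ≤ ((|Z| : ℤ) : ℝ) := by exact_mod_cast hZlow
      _ = |(Z:ℝ)| := by rw [Int.cast_abs]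
      _ ≤ C0 * Mx ^ p := habs
  have hsmall := hNp (p - 1) (by omega)
  have hfacpos : (0:ℝ) < ((p-1).factorial : ℝ) := by
    exact_mod_cast Nat.factorial_pos (p-1)
  have hpos1 : (0:ℝ) < C0 * Mx + 1 := by positivity
  have hsmall2 : Mx ^ (p-1) * (C0 * Mx + 1) < ((p-1).factorial : ℝ) := by
    rw [div_lt_iff₀ hfacpos] at hsmall
    have h10 := mul_lt_mul_of_pos_right hsmall hpos1
    calc Mx ^ (p-1) * (C0 * Mx + 1) = Mx ^ (p-1) * (C0*Mx+1) := rfl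
      _ < ((C0*Mx+1)⁻¹ * ((p-1).factorial : ℝ)) * (C0*Mx+1) := by
          nlinarith [h10]
      _ = ((p-1).factorial : ℝ) := by field_simp
  have hpowp : Mx ^ p = Mx * Mx ^ (p-1) := by
    rw [← pow_succ']
    congr 1
    omega
  have hfinal : C0 * Mx ^ p < ((p-1).factorial : ℝ) := by
    rw [hpowp]
    have hMxpos : (0:ℝ) < Mx ^ (p-1) := by positivity
    nlinarith
  linarith

theorem transcendental_e : ∀ (N : ℕ) (g : ℤ[X]), g.natDegree ≤ N → g ≠ 0 →
    (aeval (Real.exp 1)) g ≠ 0 := by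
  intro N
  induction N with
  | zero =>
    intro g hdeg hg
    have h0 : g.coeff 0 ≠ 0 := by
      intro h
      apply hg
      have := Polynomial.eq_C_of_natDegree_le_zero hdeg
      rw [this, h, map_zero]
    exact core g h0
  | succ N ih =>
    intro g hdeg hg
    by_cases h0 : g.coeff 0 = 0
    · obtain ⟨g₁, rfl⟩ := Polynomial.X_dvd_iff.mpr h0
      have hg₁ : g₁ ≠ 0 := fun h => hg (by rw [h, mul_zero])
      have hdeg₁ : g₁.natDegree ≤ N := by
        have hX : (X : ℤ[X]) ≠ 0 := X_ne_zero
        have := natDegree_mul hX hg₁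
        rw [natDegree_X] at this
        omega
      rw [map_mul, aeval_X]
      exact mul_ne_zero (Real.exp_ne_zero 1) (ih g₁ hdeg₁ hg₁)
    · exact core g h0


end LogSizeAux

open LogSizeAux in
/-- Non-isomorphic fully symmetric trees have different `ln(n+e)`-sizes: the map
`(n₁,…,n_k) ↦ n₁⋯n_k + Σᵢ (n₁⋯n_{i-1})·ln(nᵢ + e)` is injective on nonempty tuples of
integers `≥ 2`. -/
theorem log_size_injective (ns ms : List ℕ) (hnse : ns ≠ []) (hmse : ms ≠ [])
    (hns : ∀ i ∈ ns, 2 ≤ i) (hms : ∀ j ∈ ms, 2 ≤ j)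
    (h : (ns.prod : ℝ) +
          ∑ i ∈ Finset.range ns.length,
            ((ns.take i).prod : ℝ) * Real.log ((ns.getD i 0 : ℝ) + Real.exp 1) =
        (ms.prod : ℝ) +
          ∑ j ∈ Finset.range ms.length,
            ((ms.take j).prod : ℝ) * Real.log ((ms.getD j 0 : ℝ) + Real.exp 1)) :
    ns = ms := by
  have hDel : Del ns = Del ms := by
    rw [← sum_eq_Del ns, ← sum_eq_Del ms]
    exact h
  have haev : aeval (Real.exp 1) (Pol ns) = aeval (Real.exp 1) (Pol ms) := by
    rw [aeval_Pol, aeval_Pol, hDel]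
  have hPol : Pol ns = Pol ms := by
    by_contra hne
    have hsub : Pol ns - Pol ms ≠ 0 := sub_ne_zero.mpr hne
    refine transcendental_e (Pol ns - Pol ms).natDegree _ le_rfl hsub ?_
    rw [map_sub, haev, sub_self]
  have hm : ∀ j, mult j ns = mult j ms := by
    intro j
    rw [← rootMult j ns, ← rootMult j ms, hPol]
  exact comb ns ms hns hms hm
end
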